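/- Let p > 0, a ∈ ℝ and λ ≥ −a²/2, and set α = √(a² + 2λ) − a and β = 1/2 + √(a² + 2λ)/p. Then: (a) for every ξ ∈ ℝ, the function P(x,z) = e^{αz}·((ξ² + 1)/((ξ − p x)² + e^{2pz}))^{β} is strictly positive, C², and satisfies Δ^{H(p)}_a P = λ·P on ℝ²; (b) the function (x,z) ↦ e^{αz} is strictly positive, C², and satisfies Δ^{H(p)}_a e^{αz} = λ·e^{αz} on ℝ². -/

import Mathlib

open Real

/-- The hyperbolic Laplacian with drift `b` on the logarithmic model `H(r) ≡ ℝ²`: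
`Δ^{H(r)}_b g = (1/2)(e^{2rz} g_xx + g_zz) + b g_z`. -/
noncomputable def hypLap (r b : ℝ) (g : ℝ × ℝ → ℝ) (w : ℝ × ℝ) : ℝ :=
  (1/2) * (Real.exp (2*r*w.2) * iteratedDeriv 2 (fun t => g (t, w.2)) w.1
    + iteratedDeriv 2 (fun t => g (w.1, t)) w.2)
  + b * deriv (fun t => g (w.1, t)) w.2

/-- The modified Poisson kernel `P_{p,a,λ}((x,z),ξ)` for `ξ ∈ ℝ`, with
`α = √(a²+2λ) − a` and `β = 1/2 + √(a²+2λ)/p`. -/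
noncomputable def hypPoissonKernel (p a lam ξ : ℝ) (w : ℝ × ℝ) : ℝ :=
  Real.exp ((Real.sqrt (a^2 + 2*lam) - a) * w.2) *
    ((ξ^2 + 1) / ((ξ - p * w.1)^2 + Real.exp (2*p*w.2)))
      ^ ((1:ℝ)/2 + Real.sqrt (a^2 + 2*lam) / p)

private lemma iter2_eq (f : ℝ → ℝ) : iteratedDeriv 2 f = deriv (deriv f) := by
  show iteratedDeriv (1+1) f = _
  rw [iteratedDeriv_succ, iteratedDeriv_one]

private lemma poisson_eigen (p a lam ξ : ℝ) (hp : 0 < p) (hlam : -a^2/2 ≤ lam) (w : ℝ × ℝ) :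
    hypLap p a (hypPoissonKernel p a lam ξ) w = lam * hypPoissonKernel p a lam ξ w := by
  obtain ⟨x, z⟩ := w
  have h2lam : (0:ℝ) ≤ a^2 + 2*lam := by nlinarith
  set s := Real.sqrt (a^2 + 2*lam) with hs
  have hs2 : s^2 = a^2 + 2*lam := Real.sq_sqrt h2lam
  have hlamval : lam = (s^2 - a^2)/2 := by rw [hs2]; ring
  set α := s - a with hα
  set β := (1:ℝ)/2 + s/p with hβ
  have hC : (0:ℝ) < ξ^2 + 1 := by positivity
  set Cb := (ξ^2 + 1) ^ β with hCb
  have hP : hypPoissonKernel p a lam ξ = fun u : ℝ × ℝ =>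
      Real.exp (α * u.2) * (Cb * ((ξ - p*u.1)^2 + Real.exp (2*p*u.2)) ^ (-β)) := by
    funext u
    have hDu : (0:ℝ) < (ξ - p*u.1)^2 + Real.exp (2*p*u.2) := by positivity
    show Real.exp ((Real.sqrt (a^2+2*lam) - a) * u.2) *
        ((ξ^2+1) / ((ξ - p*u.1)^2 + Real.exp (2*p*u.2))) ^ ((1:ℝ)/2 + Real.sqrt (a^2+2*lam)/p)
      = _
    rw [← hs, ← hα, ← hβ, Real.div_rpow hC.le hDu.le, Real.rpow_neg hDu.le, ← hCb]
    ring
  rw [hP]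
  simp only [hypLap]
  -- basic one-variable derivatives
  have hlin : ∀ y : ℝ, HasDerivAt (fun t : ℝ => ξ - p*t) (-p) y := by
    intro y
    simpa using ((hasDerivAt_id y).const_mul p).const_sub ξ
  have hbx : ∀ y : ℝ, HasDerivAt (fun t : ℝ => (ξ - p*t)^2 + Real.exp (2*p*z))
      (2*(ξ - p*y)*(-p)) y := by
    intro y
    have := ((hlin y).fun_pow 2).add_const (Real.exp (2*p*z))
    refine this.congr_deriv ?_
    push_cast
    norm_num
  have hDx : ∀ y : ℝ, (0:ℝ) < (ξ - p*y)^2 + Real.exp (2*p*z) := fun y => by positivity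
  have hrx : ∀ (t₀ y : ℝ), HasDerivAt (fun u : ℝ => ((ξ - p*u)^2 + Real.exp (2*p*z)) ^ t₀)
      (2*(ξ - p*y)*(-p) * t₀ * ((ξ - p*y)^2 + Real.exp (2*p*z)) ^ (t₀ - 1)) y :=
    fun t₀ y => (hbx y).rpow_const (Or.inl (hDx y).ne')
  have hx1 : ∀ y : ℝ, HasDerivAt
      (fun t : ℝ => Real.exp (α*z) * (Cb * ((ξ - p*t)^2 + Real.exp (2*p*z)) ^ (-β)))
      (Real.exp (α*z) * (Cb * (2*(ξ - p*y)*(-p) * -β * ((ξ - p*y)^2 + Real.exp (2*p*z)) ^ (-β - 1)))) y :=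
    fun y => ((hrx (-β) y).const_mul Cb).const_mul (Real.exp (α*z))
  have hdx1 : deriv (fun t : ℝ => Real.exp (α*z) * (Cb * ((ξ - p*t)^2 + Real.exp (2*p*z)) ^ (-β)))
      = fun y : ℝ => Real.exp (α*z) * (Cb * (2*(ξ - p*y)*(-p) * -β * ((ξ - p*y)^2 + Real.exp (2*p*z)) ^ (-β - 1))) :=
    funext fun y => (hx1 y).deriv
  have hlinX : ∀ y : ℝ, HasDerivAt (fun t : ℝ => 2*(ξ - p*t)*(-p)) (2*(-p)*(-p)) y := by
    intro y
    exact (((hlin y).const_mul 2).mul_const (-p))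
  have hx2 : HasDerivAt
      (fun y : ℝ => Real.exp (α*z) * (Cb * (2*(ξ - p*y)*(-p) * -β * ((ξ - p*y)^2 + Real.exp (2*p*z)) ^ (-β - 1))))
      ((Real.exp (α*z)) * (Cb * ((2*(-p)*(-p) * -β) * (((ξ - p*x)^2 + Real.exp (2*p*z)) ^ (-β - 1))
        + (2*(ξ - p*x)*(-p) * -β) * (2*(ξ - p*x)*(-p) * (-β - 1) * ((ξ - p*x)^2 + Real.exp (2*p*z)) ^ (-β - 1 - 1))))) x :=
    ((((hlinX x).mul_const (-β)).mul (hrx (-β - 1) x)).const_mul Cb).const_mul (Real.exp (α*z))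
  -- z-direction
  have hez : ∀ y : ℝ, HasDerivAt (fun t : ℝ => Real.exp (α*t)) (Real.exp (α*y) * α) y := by
    intro y
    simpa using ((hasDerivAt_id y).const_mul α).exp
  have hez2 : ∀ y : ℝ, HasDerivAt (fun t : ℝ => Real.exp (2*p*t)) (Real.exp (2*p*y) * (2*p)) y := by
    intro y
    simpa using ((hasDerivAt_id y).const_mul (2*p)).exp
  have hbz : ∀ y : ℝ, HasDerivAt (fun t : ℝ => (ξ - p*x)^2 + Real.exp (2*p*t))
      (Real.exp (2*p*y) * (2*p)) y := fun y => (hez2 y).const_add ((ξ - p*x)^2)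
  have hrz : ∀ (t₀ y : ℝ), HasDerivAt (fun u : ℝ => ((ξ - p*x)^2 + Real.exp (2*p*u)) ^ t₀)
      (Real.exp (2*p*y) * (2*p) * t₀ * ((ξ - p*x)^2 + Real.exp (2*p*y)) ^ (t₀ - 1)) y :=
    fun t₀ y => (hbz y).rpow_const (Or.inl (by positivity))
  have hz1 : ∀ y : ℝ, HasDerivAt
      (fun t : ℝ => Real.exp (α*t) * (Cb * ((ξ - p*x)^2 + Real.exp (2*p*t)) ^ (-β)))
      (Real.exp (α*y) * α * (Cb * ((ξ - p*x)^2 + Real.exp (2*p*y)) ^ (-β))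
        + Real.exp (α*y) * (Cb * (Real.exp (2*p*y) * (2*p) * -β * ((ξ - p*x)^2 + Real.exp (2*p*y)) ^ (-β - 1)))) y :=
    fun y => (hez y).mul ((hrz (-β) y).const_mul Cb)
  have hdz1 : deriv (fun t : ℝ => Real.exp (α*t) * (Cb * ((ξ - p*x)^2 + Real.exp (2*p*t)) ^ (-β)))
      = fun y : ℝ => Real.exp (α*y) * α * (Cb * ((ξ - p*x)^2 + Real.exp (2*p*y)) ^ (-β))
        + Real.exp (α*y) * (Cb * (Real.exp (2*p*y) * (2*p) * -β * ((ξ - p*x)^2 + Real.exp (2*p*y)) ^ (-β - 1))) :=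
    funext fun y => (hz1 y).deriv
  have hz2 := (((hez z).mul_const α).fun_mul ((hrz (-β) z).const_mul Cb)).fun_add
    ((hez z).fun_mul (((((hez2 z).mul_const (2*p)).mul_const (-β)).fun_mul (hrz (-β - 1) z)).const_mul Cb))
  rw [iter2_eq, iter2_eq, hdx1, hdz1, hx2.deriv, hz2.deriv]
  beta_reduce
  have hD : (0:ℝ) < (ξ - p*x)^2 + Real.exp (2*p*z) := hDx x
  have e1 : ((ξ - p*x)^2 + Real.exp (2*p*z)) ^ (-β - 1)
      = ((ξ - p*x)^2 + Real.exp (2*p*z)) ^ (-β) / ((ξ - p*x)^2 + Real.exp (2*p*z)) := by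
    rw [Real.rpow_sub hD, Real.rpow_one]
  have e2 : ((ξ - p*x)^2 + Real.exp (2*p*z)) ^ (-β - 1 - 1)
      = ((ξ - p*x)^2 + Real.exp (2*p*z)) ^ (-β) / ((ξ - p*x)^2 + Real.exp (2*p*z))
          / ((ξ - p*x)^2 + Real.exp (2*p*z)) := by
    rw [Real.rpow_sub hD, Real.rpow_one, e1]
  rw [e2, e1, hlamval, hβ, hα]
  field_simp
  ring
  

private lemma poisson_contDiff (p a lam ξ : ℝ) (hp : 0 < p) :
    ContDiff ℝ 2 (hypPoissonKernel p a lam ξ) := by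
  unfold hypPoissonKernel
  apply ContDiff.mul
  · exact Real.contDiff_exp.comp (contDiff_const.mul contDiff_snd)
  · rw [contDiff_iff_contDiffAt]
    intro w
    have hD : (0:ℝ) < (ξ - p*w.1)^2 + Real.exp (2*p*w.2) := by positivity
    refine ContDiffAt.rpow_const_of_ne ?_ ?_
    · refine ContDiffAt.div contDiffAt_const ?_ hD.ne'
      exact (((contDiff_const.sub (contDiff_const.mul contDiff_fst)).pow 2).add
        (Real.contDiff_exp.comp (contDiff_const.mul contDiff_snd))).contDiffAt
    · have hC : (0:ℝ) < ξ^2 + 1 := by positivity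
      exact (div_pos hC hD).ne'

theorem poisson_kernels_are_eigenfunctions (p a lam : ℝ) (hp : 0 < p)
    (hlam : -a^2/2 ≤ lam) :
    (∀ ξ : ℝ,
      (∀ w : ℝ × ℝ, 0 < hypPoissonKernel p a lam ξ w) ∧
      ContDiff ℝ 2 (hypPoissonKernel p a lam ξ) ∧
      (∀ w : ℝ × ℝ, hypLap p a (hypPoissonKernel p a lam ξ) w = lam * hypPoissonKernel p a lam ξ w))
    ∧
    ((∀ w : ℝ × ℝ, 0 < Real.exp ((Real.sqrt (a^2 + 2*lam) - a) * w.2)) ∧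
      ContDiff ℝ 2 (fun w : ℝ × ℝ => Real.exp ((Real.sqrt (a^2 + 2*lam) - a) * w.2)) ∧
      (∀ w : ℝ × ℝ,
        hypLap p a (fun u : ℝ × ℝ => Real.exp ((Real.sqrt (a^2 + 2*lam) - a) * u.2)) w
          = lam * Real.exp ((Real.sqrt (a^2 + 2*lam) - a) * w.2))) := by
  have h2lam : (0:ℝ) ≤ a^2 + 2*lam := by nlinarith
  have hs2 : Real.sqrt (a^2 + 2*lam) ^ 2 = a^2 + 2*lam := Real.sq_sqrt h2lam
  constructor
  · intro ξ
    refine ⟨?_, poisson_contDiff p a lam ξ hp, fun w => poisson_eigen p a lam ξ hp hlam w⟩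
    intro w
    unfold hypPoissonKernel
    have hD : (0:ℝ) < (ξ - p*w.1)^2 + Real.exp (2*p*w.2) := by positivity
    have hC : (0:ℝ) < ξ^2 + 1 := by positivity
    exact mul_pos (Real.exp_pos _) (Real.rpow_pos_of_pos (div_pos hC hD) _)
  · refine ⟨fun w => Real.exp_pos _, ?_, ?_⟩
    · exact Real.contDiff_exp.comp (contDiff_const.mul contDiff_snd)
    · intro w
      obtain ⟨x, z⟩ := w
      simp only [hypLap]
      set c := Real.sqrt (a^2 + 2*lam) - a with hc
      have hez : ∀ y : ℝ, HasDerivAt (fun t : ℝ => Real.exp (c*t)) (Real.exp (c*y) * c) y := by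
        intro y
        simpa using ((hasDerivAt_id y).const_mul c).exp
      have hdz1 : deriv (fun t : ℝ => Real.exp (c*t)) = fun y : ℝ => Real.exp (c*y) * c :=
        funext fun y => (hez y).deriv
      have hconst : iteratedDeriv 2 (fun _ : ℝ => Real.exp (c*z)) x = 0 := by
        rw [iter2_eq]
        simp
      rw [hconst, iter2_eq, hdz1, ((hez z).mul_const c).deriv]
      beta_reduce
      have hlamval : lam = (Real.sqrt (a^2+2*lam)^2 - a^2)/2 := by rw [hs2]; ring
      rw [hlamval, hc]
      ring
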